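/- (Wilf's question for embedding dimension three.) Let S₃ = ⟨d₁,d₂,d₃⟩ be any numerical semigroup minimally generated by three positive integers, with genus G₀ and conductor c₃. Then G₀/c₃ ≤ 2/3, i.e. 3·G₀ ≤ 2·c₃. -/
import Mathlib

/-- A numerical semigroup: a subset of ℕ containing 0, closed under addition,
with finite complement (the set of gaps). -/
def IsNumericalSemigroup (S : Set ℕ) : Prop :=
  0 ∈ S ∧ (∀ a ∈ S, ∀ b ∈ S, a + b ∈ S) ∧ (Sᶜ : Set ℕ).Finite

/-- The genus: the number of gaps of `S`. -/
noncomputable def genus (S : Set ℕ) : ℕ := (Sᶜ : Set ℕ).ncard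

/-- The Frobenius number: the largest gap of `S`. -/
noncomputable def frobeniusNum (S : Set ℕ) : ℕ := sSup (Sᶜ : Set ℕ)

/-- The conductorNum: the least `c` such that every `n ≥ c` belongs to `S`
(equal to `frobeniusNum S + 1` when `S ≠ ℕ`). -/
noncomputable def conductorNum (S : Set ℕ) : ℕ := sInf {c : ℕ | ∀ n : ℕ, c ≤ n → n ∈ S}

/-- `S` is symmetric: for every `n` with `0 ≤ n ≤ F` (where `F = conductorNum S - 1` is the
Frobenius number), `n` is a gap iff `F - n ∈ S`. -/
def IsSymmetric (S : Set ℕ) : Prop :=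
  ∀ n : ℕ, n < conductorNum S → (n ∉ S ↔ conductorNum S - 1 - n ∈ S)

/-- The submonoid of ℕ generated by two elements. -/
def gen2 (x y : ℕ) : Set ℕ := {n : ℕ | ∃ a b : ℕ, n = a * x + b * y}

/-- The numerical semigroup `⟨d₁, d₂, d₃⟩` generated by three elements. -/
def gen3 (d₁ d₂ d₃ : ℕ) : Set ℕ := {n : ℕ | ∃ a b c : ℕ, n = a * d₁ + b * d₂ + c * d₃}

/-- `⟨d₁, d₂, d₃⟩` is minimally generated by the three positive integers `d₁ < d₂ < d₃`:
`gcd(d₁,d₂,d₃) = 1`, `3 ≤ d₁`, `d₃ ≤ d₁d₂ - d₁ - d₂`, and no generator lies in the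
submonoid generated by the other two. -/
def MinGen3 (d₁ d₂ d₃ : ℕ) : Prop :=
  3 ≤ d₁ ∧ d₁ < d₂ ∧ d₂ < d₃ ∧ d₃ + d₁ + d₂ ≤ d₁ * d₂ ∧
    Nat.gcd d₁ (Nat.gcd d₂ d₃) = 1 ∧
    d₁ ∉ gen2 d₂ d₃ ∧ d₂ ∉ gen2 d₁ d₃ ∧ d₃ ∉ gen2 d₁ d₂

/-- The `r`-th gap power sum (higher genus) `G_r = Σ_{s gap} s^r`. -/
noncomputable def gapPowerSum (S : Set ℕ) (r : ℕ) : ℕ := ∑ᶠ s ∈ (Sᶜ : Set ℕ), s ^ r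


lemma mod_solve (a m n : ℕ) (hm : 0 < m) (h : Nat.Coprime a m) :
    ∃ t, t < m ∧ n % m = (t * a) % m := by
  haveI : NeZero m := ⟨hm.ne'⟩
  set u := ZMod.unitOfCoprime a h with hu
  refine ⟨((n : ZMod m) * (↑u⁻¹ : ZMod m)).val, ZMod.val_lt _, ?_⟩
  have key : ((n : ZMod m)) = ((((n : ZMod m) * (↑u⁻¹ : ZMod m)).val * a : ℕ) : ZMod m) := by
    push_cast
    rw [ZMod.natCast_val, ZMod.cast_id]
    have : ((a : ZMod m)) = (u : ZMod m) := by simp [hu, ZMod.coe_unitOfCoprime]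
    rw [this, mul_assoc]; simp
  exact (ZMod.natCast_eq_natCast_iff _ _ _).mp key

lemma rep_two (a b n : ℕ) (hb : 0 < b) (h : Nat.Coprime a b)
    (hn : a * b ≤ n) : ∃ x y, n = x * a + y * b := by
  obtain ⟨t, ht, hmod⟩ := mod_solve a b n hb h
  have h1 : t * a ≤ n := by
    have : t * a ≤ (b - 1) * a := Nat.mul_le_mul_right _ (by omega)
    have h2 : (b - 1) * a ≤ a * b := by
      rw [mul_comm]; exact Nat.mul_le_mul_left _ (by omega)
    omega
  obtain ⟨y, hy⟩ := (Nat.modEq_iff_dvd' h1).mp hmod.symm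
  refine ⟨t, y, ?_⟩
  have : n = t * a + b * y := by omega
  linarith [this, mul_comm b y]

lemma gen3_cofinite (d₁ d₂ d₃ : ℕ) (h1 : 0 < d₁) (h2 : 0 < d₂) (h3 : 0 < d₃)
    (hg : Nat.gcd d₁ (Nat.gcd d₂ d₃) = 1) :
    ∀ n, d₁ * (d₂ * d₃) + d₂ * d₃ ≤ n → n ∈ gen3 d₁ d₂ d₃ := by
  intro n hn
  set g := Nat.gcd d₂ d₃ with hgdef
  have hgpos : 0 < g := Nat.gcd_pos_of_pos_left _ h2
  have hp : g ∣ d₂ := Nat.gcd_dvd_left _ _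
  have hq : g ∣ d₃ := Nat.gcd_dvd_right _ _
  obtain ⟨p, hpd⟩ := hp
  obtain ⟨q, hqd⟩ := hq
  have hcop : Nat.Coprime p q := by
    have h' := Nat.coprime_div_gcd_div_gcd (m := d₂) (n := d₃) hgpos
    rw [← hgdef] at h'
    rw [hpd, hqd, Nat.mul_div_cancel_left _ hgpos, Nat.mul_div_cancel_left _ hgpos] at h'
    exact h'
  obtain ⟨t, ht, hmod⟩ := mod_solve d₁ g n hgpos hg
  have htd : t * d₁ ≤ g * d₁ := Nat.mul_le_mul_right _ (le_of_lt ht)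
  have hgle : g * d₁ ≤ d₁ * (d₂ * d₃) := by
    have hh : g ≤ d₂ * d₃ := le_trans (Nat.le_of_dvd h2 (Nat.gcd_dvd_left _ _))
      (Nat.le_mul_of_pos_right _ h3)
    calc g * d₁ = d₁ * g := mul_comm _ _
    _ ≤ d₁ * (d₂ * d₃) := Nat.mul_le_mul_left _ hh
  have h1' : t * d₁ ≤ n := by omega
  obtain ⟨m, hm⟩ := (Nat.modEq_iff_dvd' h1').mp hmod.symm
  have hmbig : p * q ≤ m := by
    have e1 : d₂ * d₃ = g * (g * (p * q)) := by rw [hpd, hqd]; ring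
    have key : g * (g * (p*q)) ≤ g * m := by
      calc g * (g * (p*q)) = d₂ * d₃ := e1.symm
      _ ≤ n - t * d₁ := by omega
      _ = g * m := hm
    have h4 : g * (p * q) ≤ g * (g * (p*q)) := by
      have : p * q ≤ g * (p * q) := Nat.le_mul_of_pos_left _ hgpos
      exact Nat.mul_le_mul_left _ this
    exact Nat.le_of_mul_le_mul_left (le_trans h4 key) hgpos
  have hppos : 0 < p := by
    rcases Nat.eq_zero_or_pos p with h0 | h0
    · exfalso; rw [h0, mul_zero] at hpd; omega
    · exact h0
  obtain ⟨x, y, hxy⟩ := rep_two p q m (by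
      rcases Nat.eq_zero_or_pos q with h0 | h0
      · exfalso; rw [h0, mul_zero] at hqd; omega
      · exact h0) hcop hmbig
  refine ⟨t, x, y, ?_⟩
  have e2 : n = t * d₁ + g * m := by omega
  rw [e2, hxy, hpd, hqd]; ring
def PFset (S : Set ℕ) : Set ℕ := {f | f ∉ S ∧ ∀ s ∈ S, 0 < s → f + s ∈ S}

section Core
variable (d₁ d₂ d₃ : ℕ)

noncomputable def Bnum : ℕ := sInf {b | 0 < b ∧ ∃ u v, b * d₂ = u * d₁ + v * d₃}
noncomputable def C1num : ℕ := sInf {c | 0 < c ∧ ∃ u v, 0 < u ∧ c * d₃ = u * d₁ + v * d₂}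

variable (h1 : 0 < d₁) (h2 : 0 < d₂) (h3 : 0 < d₃)

include h1 in
lemma Bnum_spec : (0 < Bnum d₁ d₂ d₃ ∧ ∃ u v, (Bnum d₁ d₂ d₃) * d₂ = u * d₁ + v * d₃) ∧
    ∀ b, (0 < b ∧ ∃ u v, b * d₂ = u * d₁ + v * d₃) → Bnum d₁ d₂ d₃ ≤ b := by
  constructor
  · exact Nat.sInf_mem (s := {b | 0 < b ∧ ∃ u v, b * d₂ = u * d₁ + v * d₃})
      ⟨d₁, h1, d₂, 0, by ring⟩
  · exact fun b hb => Nat.sInf_le hb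

include h1 h3 in
lemma C1num_spec : (0 < C1num d₁ d₂ d₃ ∧ ∃ u v, 0 < u ∧ (C1num d₁ d₂ d₃) * d₃ = u * d₁ + v * d₂) ∧
    ∀ c, (0 < c ∧ ∃ u v, 0 < u ∧ c * d₃ = u * d₁ + v * d₂) → C1num d₁ d₂ d₃ ≤ c := by
  constructor
  · exact Nat.sInf_mem (s := {c | 0 < c ∧ ∃ u v, 0 < u ∧ c * d₃ = u * d₁ + v * d₂})
      ⟨d₁, h1, d₃, 0, h3, by ring⟩
  · exact fun c hc => Nat.sInf_le hc

include h1 in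
/-- every pseudo-Frobenius element has a representation f + d₁ = b d₂ + c d₃ -/
lemma pf_rep {f : ℕ} (hf : f ∈ PFset (gen3 d₁ d₂ d₃)) :
    ∃ b c, f + d₁ = b * d₂ + c * d₃ := by
  obtain ⟨hfS, hfp⟩ := hf
  have hd1 : d₁ ∈ gen3 d₁ d₂ d₃ := ⟨1, 0, 0, by ring⟩
  obtain ⟨a, b, c, heq⟩ := hfp d₁ hd1 h1
  rcases Nat.eq_zero_or_pos a with ha | ha
  · subst ha; rw [zero_mul, zero_add] at heq; exact ⟨b, c, heq⟩
  · exfalso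
    apply hfS
    obtain ⟨a', rfl⟩ : ∃ a', a = a' + 1 := ⟨a - 1, by omega⟩
    refine ⟨a', b, c, ?_⟩
    have e1 : (a' + 1) * d₁ = a' * d₁ + d₁ := by ring
    linarith

include h1 h3 in
/-- no representation of f + d₁ has d₃-coordinate ≥ C₁ -/
lemma pf_c_lt {f b c : ℕ} (hf : f ∈ PFset (gen3 d₁ d₂ d₃))
    (heq : f + d₁ = b * d₂ + c * d₃) : c < C1num d₁ d₂ d₃ := by
  set C₁ := C1num d₁ d₂ d₃ with hC
  obtain ⟨⟨hCpos, u, v, hu, hCeq⟩, _⟩ := C1num_spec d₁ d₂ d₃ h1 h3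
  by_contra hge
  push_neg at hge
  apply hf.1
  obtain ⟨u', rfl⟩ : ∃ u', u = u' + 1 := ⟨u - 1, by omega⟩
  obtain ⟨c', rfl⟩ : ∃ c', c = C₁ + c' := ⟨c - C₁, by omega⟩
  refine ⟨u', b + v, c', ?_⟩
  have e1 : (C₁ + c') * d₃ = C₁ * d₃ + c' * d₃ := by ring
  have e2 : (u' + 1) * d₁ = u' * d₁ + d₁ := by ring
  have e3 : (b + v) * d₂ = b * d₂ + v * d₂ := by ring
  linarith

include h1 h3 in
/-- the minimal-b representation has b < B (and c < C₁) -/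
lemma pf_good_rep {f : ℕ} (hf : f ∈ PFset (gen3 d₁ d₂ d₃)) :
    ∃ b c, f + d₁ = b * d₂ + c * d₃ ∧ b < Bnum d₁ d₂ d₃ ∧ c < C1num d₁ d₂ d₃ := by
  set B := Bnum d₁ d₂ d₃ with hB
  have hne : {b | ∃ c, f + d₁ = b * d₂ + c * d₃}.Nonempty := by
    obtain ⟨b, c, h⟩ := pf_rep d₁ d₂ d₃ h1 hf; exact ⟨b, c, h⟩
  obtain ⟨c, heq⟩ := Nat.sInf_mem hne
  set b := sInf {b | ∃ c, f + d₁ = b * d₂ + c * d₃} with hbdef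
  refine ⟨b, c, heq, ?_, pf_c_lt d₁ d₂ d₃ h1 h3 hf heq⟩
  by_contra hge
  push_neg at hge
  obtain ⟨⟨hBpos, u, v, hBeq⟩, _⟩ := Bnum_spec d₁ d₂ d₃ h1
  rcases Nat.eq_zero_or_pos u with hu | hu
  · -- B * d₂ = v * d₃ : reduce b, contradicting minimality
    subst hu
    rw [zero_mul, zero_add] at hBeq
    obtain ⟨b', hb'⟩ : ∃ b', b = B + b' := ⟨b - B, by omega⟩
    have hmem : b' ∈ {b | ∃ c, f + d₁ = b * d₂ + c * d₃} := by
      refine ⟨c + v, ?_⟩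
      have e1 : (B + b') * d₂ = B * d₂ + b' * d₂ := by ring
      have e2 : (c + v) * d₃ = c * d₃ + v * d₃ := by ring
      rw [hb'] at heq
      linarith
    have := Nat.sInf_le hmem
    omega
  · apply hf.1
    obtain ⟨u', rfl⟩ : ∃ u', u = u' + 1 := ⟨u - 1, by omega⟩
    obtain ⟨b', hb'⟩ : ∃ b', b = B + b' := ⟨b - B, by omega⟩
    refine ⟨u', b', c + v, ?_⟩
    have e1 : (B + b') * d₂ = B * d₂ + b' * d₂ := by ring
    have e2 : (c + v) * d₃ = c * d₃ + v * d₃ := by ring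
    have e3 : (u' + 1) * d₁ = u' * d₁ + d₁ := by ring
    rw [hb'] at heq
    linarith

include h1 h3 in
/-- join analysis: a "covering relation" for any element β d₂ + γ d₃ ∈ d₁ + S
    with β < B, γ < C₁. -/
lemma join_lemma {β γ s : ℕ} (hβ : β < Bnum d₁ d₂ d₃) (hγ : γ < C1num d₁ d₂ d₃)
    (hs : s ∈ gen3 d₁ d₂ d₃) (heq : β * d₂ + γ * d₃ = d₁ + s) :
    ∃ k e f, 0 < k ∧ 0 < e ∧ e ≤ β ∧ 0 < f ∧ f ≤ γ ∧ k * d₁ = e * d₂ + f * d₃ := by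
  obtain ⟨p, q, r, rfl⟩ := hs
  -- β d₂ + γ d₃ = (p+1) d₁ + q d₂ + r d₃
  by_cases hq : q < β
  · by_cases hr : r < γ
    · -- good case
      refine ⟨p + 1, β - q, γ - r, Nat.succ_pos _, by omega, by omega, by omega, by omega, ?_⟩
      obtain ⟨e, he⟩ : ∃ e, β = q + e := ⟨β - q, by omega⟩
      obtain ⟨f, hf⟩ : ∃ f, γ = r + f := ⟨γ - r, by omega⟩
      rw [he, hf] at heq ⊢
      have e1 : (q + e) * d₂ = q * d₂ + e * d₂ := by ring
      have e2 : (r + f) * d₃ = r * d₃ + f * d₃ := by ring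
      have e3 : (p + 1) * d₁ = p * d₁ + d₁ := by ring
      have e4 : q + e - q = e := by omega
      have e5 : r + f - r = f := by omega
      rw [e4, e5, e3]
      linarith
    · -- e d₂ = (p+1) d₁ + (r-γ) d₃ : contradicts β < B
      exfalso
      obtain ⟨e, he⟩ : ∃ e, β = q + e := ⟨β - q, by omega⟩
      obtain ⟨r', hr'⟩ : ∃ r', r = γ + r' := ⟨r - γ, by omega⟩
      have hepos : 0 < e := by omega
      have hrel : e * d₂ = (p + 1) * d₁ + r' * d₃ := by
        rw [he, hr'] at heq
        have e1 : (q + e) * d₂ = q * d₂ + e * d₂ := by ring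
        have e2 : (γ + r') * d₃ = γ * d₃ + r' * d₃ := by ring
        have e3 : (p + 1) * d₁ = p * d₁ + d₁ := by ring
        linarith
      have := (Bnum_spec d₁ d₂ d₃ h1).2 e ⟨hepos, p + 1, r', hrel⟩
      omega
  · by_cases hr : r < γ
    · -- f d₃ = (p+1) d₁ + (q-β) d₂ : contradicts γ < C₁
      exfalso
      obtain ⟨f, hf⟩ : ∃ f, γ = r + f := ⟨γ - r, by omega⟩
      obtain ⟨q', hq'⟩ : ∃ q', q = β + q' := ⟨q - β, by omega⟩
      have hfpos : 0 < f := by omega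
      have hrel : f * d₃ = (p + 1) * d₁ + q' * d₂ := by
        rw [hf, hq'] at heq
        have e1 : (β + q') * d₂ = β * d₂ + q' * d₂ := by ring
        have e2 : (r + f) * d₃ = r * d₃ + f * d₃ := by ring
        have e3 : (p + 1) * d₁ = p * d₁ + d₁ := by ring
        linarith
      have := (C1num_spec d₁ d₂ d₃ h1 h3).2 f ⟨hfpos, p + 1, q', Nat.succ_pos _, hrel⟩
      omega
    · -- impossible : 0 = (p+1) d₁ + ...
      exfalso
      obtain ⟨q', hq'⟩ : ∃ q', q = β + q' := ⟨q - β, by omega⟩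
      obtain ⟨r', hr'⟩ : ∃ r', r = γ + r' := ⟨r - γ, by omega⟩
      rw [hq', hr'] at heq
      have e1 : (β + q') * d₂ = β * d₂ + q' * d₂ := by ring
      have e2 : (γ + r') * d₃ = γ * d₃ + r' * d₃ := by ring
      have e3 : (p + 1) * d₁ = p * d₁ + d₁ := by ring
      linarith [Nat.zero_le (q' * d₂), Nat.zero_le (r' * d₃), Nat.zero_le (p * d₁)]

/-- a covering relation with (e,f) ≤ (b,c) forces f₀ ∈ S -/
lemma diag_lemma {f₀ b c k e f : ℕ} (heq : f₀ + d₁ = b * d₂ + c * d₃)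
    (hk : 0 < k) (he : e ≤ b) (hf : f ≤ c) (hrel : k * d₁ = e * d₂ + f * d₃) :
    f₀ ∈ gen3 d₁ d₂ d₃ := by
  obtain ⟨k', rfl⟩ : ∃ k', k = k' + 1 := ⟨k - 1, by omega⟩
  obtain ⟨b', rfl⟩ : ∃ b', b = e + b' := ⟨b - e, by omega⟩
  obtain ⟨c', rfl⟩ : ∃ c', c = f + c' := ⟨c - f, by omega⟩
  refine ⟨k', b', c', ?_⟩
  have e1 : (e + b') * d₂ = e * d₂ + b' * d₂ := by ring
  have e2 : (f + c') * d₃ = f * d₃ + c' * d₃ := by ring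
  have e3 : (k' + 1) * d₁ = k' * d₁ + d₁ := by ring
  linarith


end Core
section Core2
variable (d₁ d₂ d₃ : ℕ) (h1 : 0 < d₁) (h2 : 0 < d₂) (h3 : 0 < d₃)

include h1 h2 h3 in
lemma core_contradiction {f₁ f₂ b₁ c₁ b₂ c₂ b₃ : ℕ}
    (hf₁ : f₁ ∈ PFset (gen3 d₁ d₂ d₃)) (hf₂ : f₂ ∈ PFset (gen3 d₁ d₂ d₃))
    (e₁ : f₁ + d₁ = b₁ * d₂ + c₁ * d₃) (e₂ : f₂ + d₁ = b₂ * d₂ + c₂ * d₃)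
    (hb12 : b₁ < b₂) (hb23 : b₂ < b₃) (hc21 : c₂ < c₁)
    (hbB : b₃ < Bnum d₁ d₂ d₃) (hcC : c₁ < C1num d₁ d₂ d₃) : False := by
  set S := gen3 d₁ d₂ d₃ with hS
  -- join of w₁ and w₂ : b₂ d₂ + c₁ d₃
  have hs₁m : (b₂ - b₁) * d₂ ∈ S := ⟨0, b₂ - b₁, 0, by ring⟩
  have hs₁p : 0 < (b₂ - b₁) * d₂ := Nat.mul_pos (by omega) h2
  have hJ₁mem : f₁ + (b₂ - b₁) * d₂ ∈ S := hf₁.2 _ hs₁m hs₁p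
  have hJ₁eq : b₂ * d₂ + c₁ * d₃ = d₁ + (f₁ + (b₂ - b₁) * d₂) := by
    obtain ⟨β, hβ⟩ : ∃ β, b₂ = b₁ + β := ⟨b₂ - b₁, by omega⟩
    rw [hβ]
    have t1 : (b₁ + β) * d₂ = b₁ * d₂ + β * d₂ := by ring
    have t2 : b₁ + β - b₁ = β := by omega
    rw [t1, t2]
    linarith
  obtain ⟨k₁, g₁, t₁, hk₁, hg₁0, hg₁, ht₁0, ht₁le, hrel₁⟩ :=
    join_lemma d₁ d₂ d₃ h1 h3 (by omega) hcC hJ₁mem hJ₁eq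
  have ht₁ : c₂ < t₁ := by
    by_contra hle
    exact hf₂.1 (diag_lemma d₁ d₂ d₃ e₂ hk₁ (by omega) (by omega) hrel₁)
  -- join of w₂ and w₃ : b₃ d₂ + c₂ d₃
  have hs₂m : (b₃ - b₂) * d₂ ∈ S := ⟨0, b₃ - b₂, 0, by ring⟩
  have hs₂p : 0 < (b₃ - b₂) * d₂ := Nat.mul_pos (by omega) h2
  have hJ₂mem : f₂ + (b₃ - b₂) * d₂ ∈ S := hf₂.2 _ hs₂m hs₂p
  have hJ₂eq : b₃ * d₂ + c₂ * d₃ = d₁ + (f₂ + (b₃ - b₂) * d₂) := by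
    obtain ⟨β, hβ⟩ : ∃ β, b₃ = b₂ + β := ⟨b₃ - b₂, by omega⟩
    rw [hβ]
    have t1 : (b₂ + β) * d₂ = b₂ * d₂ + β * d₂ := by ring
    have t2 : b₂ + β - b₂ = β := by omega
    rw [t1, t2]
    linarith
  obtain ⟨k₂, g₂, t₂, hk₂, hg₂0, hg₂le, ht₂0, ht₂le, hrel₂⟩ :=
    join_lemma d₁ d₂ d₃ h1 h3 hbB (by omega) hJ₂mem hJ₂eq
  have hg₂ : b₂ < g₂ := by
    by_contra hle
    exact hf₂.1 (diag_lemma d₁ d₂ d₃ e₂ hk₂ (by omega) ht₂le hrel₂)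
  -- now g₁ ≤ b₂ < g₂ ≤ b₃ < B and t₂ ≤ c₂ < t₁ ≤ c₁ < C₁
  rcases le_or_gt k₁ k₂ with hk | hk
  · -- (g₂ - g₁) d₂ = (k₂ - k₁) d₁ + (t₁ - t₂) d₃, contradicting minimality of B
    obtain ⟨κ, hκ⟩ : ∃ κ, k₂ = k₁ + κ := ⟨k₂ - k₁, by omega⟩
    obtain ⟨ε, hε⟩ : ∃ ε, g₂ = g₁ + ε := ⟨g₂ - g₁, by omega⟩
    obtain ⟨φ, hφ⟩ : ∃ φ, t₁ = t₂ + φ := ⟨t₁ - t₂, by omega⟩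
    have hrel : ε * d₂ = κ * d₁ + φ * d₃ := by
      rw [hκ] at hrel₂; rw [hε] at hrel₂; rw [hφ] at hrel₁
      have t1 : (k₁ + κ) * d₁ = k₁ * d₁ + κ * d₁ := by ring
      have t2 : (g₁ + ε) * d₂ = g₁ * d₂ + ε * d₂ := by ring
      have t3 : (t₂ + φ) * d₃ = t₂ * d₃ + φ * d₃ := by ring
      linarith
    have hBle := (Bnum_spec d₁ d₂ d₃ h1).2 ε ⟨by omega, κ, φ, hrel⟩
    omega
  · -- (t₁ - t₂) d₃ = (k₁ - k₂) d₁ + (g₂ - g₁) d₂, contradicting minimality of C₁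
    obtain ⟨κ, hκ⟩ : ∃ κ, k₁ = k₂ + κ := ⟨k₁ - k₂, by omega⟩
    obtain ⟨ε, hε⟩ : ∃ ε, g₂ = g₁ + ε := ⟨g₂ - g₁, by omega⟩
    obtain ⟨φ, hφ⟩ : ∃ φ, t₁ = t₂ + φ := ⟨t₁ - t₂, by omega⟩
    have hrel : φ * d₃ = κ * d₁ + ε * d₂ := by
      rw [hκ, hφ] at hrel₁; rw [hε] at hrel₂
      have t1 : (k₂ + κ) * d₁ = k₂ * d₁ + κ * d₁ := by ring
      have t2 : (g₁ + ε) * d₂ = g₁ * d₂ + ε * d₂ := by ring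
      have t3 : (t₂ + φ) * d₃ = t₂ * d₃ + φ * d₃ := by ring
      linarith
    have hCle := (C1num_spec d₁ d₂ d₃ h1 h3).2 φ ⟨by omega, κ, ε, by omega, hrel⟩
    omega

include h1 h2 h3 in
/-- a 3-generated numerical semigroup has at most two pseudo-Frobenius elements -/
lemma no_three_pf {f g h : ℕ} (hf : f ∈ PFset (gen3 d₁ d₂ d₃))
    (hg : g ∈ PFset (gen3 d₁ d₂ d₃)) (hh : h ∈ PFset (gen3 d₁ d₂ d₃))
    (hfg : f ≠ g) (hfh : f ≠ h) (hgh : g ≠ h) : False := by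
  obtain ⟨bf, cf, ef, hbf, hcf⟩ := pf_good_rep d₁ d₂ d₃ h1 h3 hf
  obtain ⟨bg, cg, eg, hbg, hcg⟩ := pf_good_rep d₁ d₂ d₃ h1 h3 hg
  obtain ⟨bh, ch, eh, hbh, hch⟩ := pf_good_rep d₁ d₂ d₃ h1 h3 hh
  have inc : ∀ x y bx cx byy cyy, x ∈ PFset (gen3 d₁ d₂ d₃) → y ∈ PFset (gen3 d₁ d₂ d₃) →
      x ≠ y → x + d₁ = bx * d₂ + cx * d₃ → y + d₁ = byy * d₂ + cyy * d₃ →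
      ¬(bx ≤ byy ∧ cx ≤ cyy) := by
    rintro x y bx cx byy cyy hx hy hxy ex ey ⟨hble, hcle⟩
    obtain ⟨β, hβ⟩ : ∃ β, byy = bx + β := ⟨byy - bx, by omega⟩
    obtain ⟨γ, hγ⟩ : ∃ γ, cyy = cx + γ := ⟨cyy - cx, by omega⟩
    have hsum : y + d₁ = x + d₁ + (β * d₂ + γ * d₃) := by
      rw [hβ, hγ] at ey
      have t1 : (bx + β) * d₂ = bx * d₂ + β * d₂ := by ring
      have t2 : (cx + γ) * d₃ = cx * d₃ + γ * d₃ := by ring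
      linarith
    by_cases h0 : β = 0 ∧ γ = 0
    · apply hxy
      obtain ⟨rfl, rfl⟩ := h0
      simp at hsum
      omega
    · have hspos : 0 < β * d₂ + γ * d₃ := by
        rcases Nat.eq_zero_or_pos β with hβ0 | hβ0
        · have : γ ≠ 0 := by tauto
          have := Nat.mul_pos (Nat.pos_of_ne_zero this) h3
          omega
        · have := Nat.mul_pos hβ0 h2
          omega
      have hmem : β * d₂ + γ * d₃ ∈ gen3 d₁ d₂ d₃ := ⟨0, β, γ, by ring⟩
      have : y ∈ gen3 d₁ d₂ d₃ := by
        have := hx.2 _ hmem hspos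
        have hyx : y = x + (β * d₂ + γ * d₃) := by omega
        rwa [hyx]
      exact hy.1 this
  have ifg := inc f g bf cf bg cg hf hg hfg ef eg
  have igf := inc g f bg cg bf cf hg hf hfg.symm eg ef
  have ifh := inc f h bf cf bh ch hf hh hfh ef eh
  have ihf := inc h f bh ch bf cf hh hf hfh.symm eh ef
  have igh := inc g h bg cg bh ch hg hh hgh eg eh
  have ihg := inc h g bh ch bg cg hh hg hgh.symm eh eg
  -- b-coordinates are pairwise distinct
  have hbfg : bf ≠ bg := by rintro rfl; omega
  have hbfh : bf ≠ bh := by rintro rfl; omega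
  have hbgh : bg ≠ bh := by rintro rfl; omega
  -- six orderings
  rcases lt_trichotomy bf bg with h12 | h12 | h12
  · rcases lt_trichotomy bg bh with h23 | h23 | h23
    · exact core_contradiction d₁ d₂ d₃ h1 h2 h3 hf hg ef eg h12 h23 (by omega) hbh hcf
    · omega
    · rcases lt_trichotomy bf bh with h13 | h13 | h13
      · exact core_contradiction d₁ d₂ d₃ h1 h2 h3 hf hh ef eh h13 h23 (by omega) hbg hcf
      · omega
      · exact core_contradiction d₁ d₂ d₃ h1 h2 h3 hh hf eh ef h13 h12 (by omega) hbg hch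
  · omega
  · rcases lt_trichotomy bf bh with h13 | h13 | h13
    · exact core_contradiction d₁ d₂ d₃ h1 h2 h3 hg hf eg ef h12 h13 (by omega) hbh hcg
    · omega
    · rcases lt_trichotomy bg bh with h23 | h23 | h23
      · exact core_contradiction d₁ d₂ d₃ h1 h2 h3 hg hh eg eh h23 h13 (by omega) hbf hcg
      · omega
      · exact core_contradiction d₁ d₂ d₃ h1 h2 h3 hh hg eh eg h23 h12 (by omega) hbf hch

end Core2

/-- Wilf's question for embedding dimension three: for any `S₃ = ⟨d₁,d₂,d₃⟩`
minimally generated by three positive integers, `G₀/c₃ ≤ 2/3`, i.e. `3·G₀ ≤ 2·c₃`. -/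
theorem wilf_embdim_three (d₁ d₂ d₃ : ℕ) (h : MinGen3 d₁ d₂ d₃) :
    3 * genus (gen3 d₁ d₂ d₃) ≤ 2 * conductorNum (gen3 d₁ d₂ d₃) ∧
      (genus (gen3 d₁ d₂ d₃) : ℚ) / (conductorNum (gen3 d₁ d₂ d₃) : ℚ) ≤ 2 / 3 := by
  obtain ⟨hd3, h12, h23, hbound, hgcd, hng1, hng2, hng3⟩ := h
  set S := gen3 d₁ d₂ d₃ with hSdef
  have h1 : 0 < d₁ := by omega
  have h2 : 0 < d₂ := by omega
  have h3 : 0 < d₃ := by omega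
  have hzero : (0:ℕ) ∈ S := ⟨0, 0, 0, by ring⟩
  have hadd : ∀ a ∈ S, ∀ b ∈ S, a + b ∈ S := by
    rintro a ⟨x1, x2, x3, rfl⟩ b ⟨y1, y2, y3, rfl⟩
    exact ⟨x1 + y1, x2 + y2, x3 + y3, by ring⟩
  have hcof := gen3_cofinite d₁ d₂ d₃ h1 h2 h3 hgcd
  set c := conductorNum S with hcdef
  have hcne : {m : ℕ | ∀ n, m ≤ n → n ∈ S}.Nonempty :=
    ⟨d₁ * (d₂ * d₃) + d₂ * d₃, fun n hn => hcof n hn⟩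
  have hc : ∀ n, c ≤ n → n ∈ S := Nat.sInf_mem hcne
  have hone : (1:ℕ) ∉ S := by
    rintro ⟨a, b, e, habe⟩
    rcases Nat.eq_zero_or_pos a with rfl | ha
    · rcases Nat.eq_zero_or_pos b with rfl | hb
      · rcases Nat.eq_zero_or_pos e with rfl | he
        · simp at habe
        · have := Nat.le_mul_of_pos_left d₃ he; omega
      · have := Nat.le_mul_of_pos_left d₂ hb
        have := Nat.zero_le (e * d₃); omega
    · have := Nat.le_mul_of_pos_left d₁ ha
      have := Nat.zero_le (b * d₂); have := Nat.zero_le (e * d₃); omega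
  have hc2 : 2 ≤ c := by
    by_contra hcon
    push_neg at hcon
    exact hone (hc 1 (by omega))
  have hgaplt : ∀ x, x ∉ S → x < c := by
    intro x hx
    by_contra hge
    exact hx (hc x (by omega))
  have hFnot : (c - 1) ∉ S := by
    intro hmem
    have hmem' : c - 1 ∈ {m : ℕ | ∀ n, m ≤ n → n ∈ S} := by
      intro n hn
      rcases eq_or_lt_of_le hn with heq | hlt
      · rwa [← heq]
      · exact hc n (by omega)
    have hle : c ≤ c - 1 := Nat.sInf_le hmem'
    omega
  have hFPF : (c - 1) ∈ PFset S := ⟨hFnot, fun s hs hspos => hc _ (by omega)⟩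
  have hdom : ∀ x, x ∉ S → ∃ f ∈ PFset S, ∃ s ∈ S, x + s = f := by
    intro x hx
    set D := {y | y ∉ S ∧ ∃ s ∈ S, x + s = y} with hD
    have hxD : x ∈ D := ⟨hx, 0, hzero, by ring⟩
    have hbdd : BddAbove D := ⟨c, fun y hy => le_of_lt (hgaplt y hy.1)⟩
    have hfD : sSup D ∈ D := Nat.sSup_mem ⟨x, hxD⟩ hbdd
    refine ⟨sSup D, ⟨hfD.1, ?_⟩, hfD.2⟩
    intro s hs hspos
    by_contra hns
    have hmem : sSup D + s ∈ D := by
      obtain ⟨s₀, hs₀, he⟩ := hfD.2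
      exact ⟨hns, s₀ + s, hadd _ hs₀ _ hs, by omega⟩
    have := le_csSup hbdd hmem
    omega
  obtain ⟨f₂, hf₂n, hf₂lt, hsub⟩ :
      ∃ f₂, f₂ ∉ S ∧ f₂ < c ∧ ∀ f ∈ PFset S, f = c - 1 ∨ f = f₂ := by
    by_cases hex : ∃ f, f ∈ PFset S ∧ f ≠ c - 1
    · obtain ⟨f₂, hf₂, hne⟩ := hex
      refine ⟨f₂, hf₂.1, hgaplt _ hf₂.1, ?_⟩
      intro f hf
      by_contra hcon
      push_neg at hcon
      exact no_three_pf d₁ d₂ d₃ h1 h2 h3 hf hFPF hf₂ hcon.1 hcon.2 (Ne.symm hne)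
    · push_neg at hex
      exact ⟨c - 1, hFnot, by omega, fun f hf => Or.inl (hex f hf)⟩
  have hScFin : (Sᶜ : Set ℕ).Finite :=
    Set.Finite.subset (Set.finite_Iio c) (fun x hx => hgaplt x hx)
  set N := S ∩ Set.Iio c with hN
  have hNfin : N.Finite := Set.Finite.subset (Set.finite_Iio c) (fun x hx => hx.2)
  have half : ∀ f₀, f₀ ∉ S → f₀ < c →
      {x | x ∉ S ∧ ∃ s ∈ S, x + s = f₀}.ncard ≤ N.ncard := by
    intro f₀ hf₀ hf₀lt
    apply Set.ncard_le_ncard_of_injOn (fun x => f₀ - x)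
    · rintro x ⟨hx, s, hsS, hxs⟩
      have hse : f₀ - x = s := by omega
      show f₀ - x ∈ N
      rw [hse]
      exact ⟨hsS, by simp only [Set.mem_Iio]; omega⟩
    · rintro x ⟨hx, s, hsS, hxs⟩ x' ⟨hx', s', hsS', hxs'⟩ hfe
      have hfe' : f₀ - x = f₀ - x' := hfe
      omega
  have hg_le : (Sᶜ : Set ℕ).ncard ≤ 2 * N.ncard := by
    have hcover : (Sᶜ : Set ℕ) ⊆
        {x | x ∉ S ∧ ∃ s ∈ S, x + s = c - 1} ∪ {x | x ∉ S ∧ ∃ s ∈ S, x + s = f₂} := by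
      intro x hx
      obtain ⟨f, hfPF, s, hsS, he⟩ := hdom x hx
      rcases hsub f hfPF with rfl | rfl
      · exact Or.inl ⟨hx, s, hsS, he⟩
      · exact Or.inr ⟨hx, s, hsS, he⟩
    have hsub1 : {x | x ∉ S ∧ ∃ s ∈ S, x + s = c - 1} ⊆ (Sᶜ : Set ℕ) := fun x hx => hx.1
    have hsub2 : {x | x ∉ S ∧ ∃ s ∈ S, x + s = f₂} ⊆ (Sᶜ : Set ℕ) := fun x hx => hx.1
    calc (Sᶜ : Set ℕ).ncard
        ≤ ({x | x ∉ S ∧ ∃ s ∈ S, x + s = c - 1} ∪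
            {x | x ∉ S ∧ ∃ s ∈ S, x + s = f₂}).ncard :=
          Set.ncard_le_ncard hcover
            ((hScFin.subset hsub1).union (hScFin.subset hsub2))
      _ ≤ {x | x ∉ S ∧ ∃ s ∈ S, x + s = c - 1}.ncard
          + {x | x ∉ S ∧ ∃ s ∈ S, x + s = f₂}.ncard := Set.ncard_union_le _ _
      _ ≤ 2 * N.ncard := by
          have ha := half (c - 1) hFnot (by omega)
          have hb := half f₂ hf₂n hf₂lt
          omega
  have hpart : (Sᶜ : Set ℕ).ncard + N.ncard = c := by
    have hun : (Sᶜ : Set ℕ) ∪ N = Set.Iio c := by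
      ext x
      constructor
      · rintro (hx | hx)
        · exact hgaplt x hx
        · exact hx.2
      · intro hx
        by_cases hxS : x ∈ S
        · exact Or.inr ⟨hxS, hx⟩
        · exact Or.inl hxS
    have hdisj : Disjoint (Sᶜ : Set ℕ) N := by
      rw [Set.disjoint_left]
      rintro x hx ⟨hxS, _⟩
      exact hx hxS
    have he1 := Set.ncard_union_eq hdisj hScFin hNfin
    rw [hun] at he1
    have he2 : (Set.Iio c).ncard = c := by
      rw [← Finset.coe_range, Set.ncard_coe_finset, Finset.card_range]
    omega
  have hmain : 3 * genus S ≤ 2 * c := by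
    have hgdef : genus S = (Sᶜ : Set ℕ).ncard := rfl
    omega
  refine ⟨hmain, ?_⟩
  have hcpos : (0:ℚ) < (c:ℚ) := by exact_mod_cast Nat.lt_of_lt_of_le Nat.zero_lt_two hc2
  rw [div_le_div_iff₀ hcpos (by norm_num)]
  have h' : ((3 * genus S : ℕ) : ℚ) ≤ ((2 * c : ℕ) : ℚ) := by exact_mod_cast hmain
  push_cast at h'
  linarith
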